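/- Let q be a power of a prime, let N be a positive divisor of q−1, let f : Z/NZ → F_q be a function not identically zero, and let ζ_N be a primitive N-th root of unity in F_q^*. Then the least period of the inverse DFT F_{ζ_N}^{−1}[f] equals the least period of F_{ζ_N}[f], namely N/gcd(N, supp(f)). -/

import Mathlib

open scoped Classical

noncomputable section

/-- `g` is `r`-periodic on `Z/NZ`. -/
def IsPeriodOf {N : ℕ} {α : Type*} (g : ZMod N → α) (r : ℕ) : Prop :=
  ∀ m : ZMod N, g (m + (r : ZMod N)) = g m

/-- `r` is the least period of `g`. -/
def IsLeastPeriod {N : ℕ} {α : Type*} (g : ZMod N → α) (r : ℕ) : Prop :=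
  0 < r ∧ IsPeriodOf g r ∧ ∀ s : ℕ, 0 < s → IsPeriodOf g s → r ≤ s

/-- The discrete Fourier transform based on `ζ`:
`F_ζ[f](m) = ∑_{j ∈ Z/NZ} f(j) ζ^{mj}`. -/
def dft {F : Type*} [CommRing F] {N : ℕ} [NeZero N] (ζ : F) (f : ZMod N → F) :
    ZMod N → F :=
  fun m => ∑ j : ZMod N, f j * ζ ^ (m.val * j.val)

/-- The inverse DFT based on `ζ`: `F_ζ⁻¹[f] = N⁻¹ F_{ζ⁻¹}[f]`. -/
def idft {F : Type*} [Field F] {N : ℕ} [NeZero N] (ζ : F) (f : ZMod N → F) :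
    ZMod N → F :=
  fun m => (N : F)⁻¹ * dft ζ⁻¹ f m

lemma pow_congr_mod {F : Type*} [Monoid F] {N : ℕ} {ζ : F} (hζ : ζ ^ N = 1)
    {a b : ℕ} (h : a % N = b % N) : ζ ^ a = ζ ^ b := by
  conv_lhs => rw [← Nat.div_add_mod a N, pow_add, pow_mul, hζ, one_pow, one_mul, h]
  conv_rhs => rw [← Nat.div_add_mod b N, pow_add, pow_mul, hζ, one_pow, one_mul]

lemma geom_sum_zmod {F : Type*} [Field F] {N : ℕ} [NeZero N] {x : F} (hx : x ^ N = 1) :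
    ∑ m : ZMod N, x ^ m.val = if x = 1 then (N : F) else 0 := by
  have h1 : ∑ m : ZMod N, x ^ m.val = ∑ i ∈ Finset.range N, x ^ i := by
    refine Finset.sum_nbij' (fun m => m.val) (fun i => (i : ZMod N)) ?_ ?_ ?_ ?_ ?_
    · intro m _; exact Finset.mem_range.mpr (ZMod.val_lt m)
    · intro i _; exact Finset.mem_univ _
    · intro m _; exact ZMod.natCast_rightInverse m
    · intro i hi; exact ZMod.val_cast_of_lt (Finset.mem_range.mp hi)
    · intro m _; rfl
  rw [h1]
  split_ifs with h
  · simp [h]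
  · rw [geom_sum_eq h, hx, sub_self, zero_div]

lemma dft_zero_imp {F : Type*} [Field F] {N : ℕ} [NeZero N] {ζ : F}
    (hζ : IsPrimitiveRoot ζ N) (hNF : (N : F) ≠ 0) {f : ZMod N → F}
    (h : ∀ m, dft ζ f m = 0) : f = 0 := by
  have hNe : N ≠ 0 := NeZero.ne N
  have hζ0 : ζ ≠ 0 := hζ.ne_zero hNe
  funext i
  have key : ∑ m : ZMod N, dft ζ f m * (ζ⁻¹ ^ i.val) ^ m.val = f i * N := by
    simp only [dft, Finset.sum_mul]
    rw [Finset.sum_comm]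
    have step : ∀ j : ZMod N,
        ∑ m : ZMod N, f j * ζ ^ (m.val * j.val) * (ζ⁻¹ ^ i.val) ^ m.val
        = f j * ∑ m : ZMod N, (ζ ^ j.val * ζ⁻¹ ^ i.val) ^ m.val := by
      intro j
      rw [Finset.mul_sum]
      refine Finset.sum_congr rfl fun m _ => ?_
      rw [mul_comm m.val j.val, pow_mul, mul_assoc, ← mul_pow]
    simp only [step]
    have horth : ∀ j : ZMod N,
        ∑ m : ZMod N, (ζ ^ j.val * ζ⁻¹ ^ i.val) ^ m.val = if j = i then (N : F) else 0 := by
      intro j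
      have hx : (ζ ^ j.val * ζ⁻¹ ^ i.val) ^ N = 1 := by
        rw [mul_pow, ← pow_mul, ← pow_mul, mul_comm j.val N, mul_comm i.val N,
          pow_mul, pow_mul, hζ.pow_eq_one, inv_pow, hζ.pow_eq_one, one_pow, inv_one, one_pow, one_mul]
      rw [geom_sum_zmod hx]
      congr 1
      simp only [eq_iff_iff]
      constructor
      · intro hx1
        have : ζ ^ j.val = ζ ^ i.val := by
          field_simp at hx1
          have hx2 : ζ ^ j.val * (ζ ^ i.val)⁻¹ = 1 := by simpa using hx1
          exact (mul_inv_eq_one₀ (pow_ne_zero _ hζ0)).mp hx2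
        exact ZMod.val_injective N (hζ.pow_inj (ZMod.val_lt j) (ZMod.val_lt i) this)
      · rintro rfl; rw [inv_pow, mul_inv_cancel₀ (pow_ne_zero _ hζ0)]
    simp only [horth, mul_ite, mul_zero]
    simp
  have : f i * N = 0 := by rw [← key]; simp [h]
  exact (mul_eq_zero.mp this).resolve_right hNF

lemma dft_shift {F : Type*} [Field F] {N : ℕ} [NeZero N] {ζ : F}
    (hζN : ζ ^ N = 1) (f : ZMod N → F) (r : ℕ) (m : ZMod N) :
    dft ζ f (m + (r : ZMod N)) = dft ζ (fun j => f j * ζ ^ (r * j.val)) m := by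
  unfold dft
  refine Finset.sum_congr rfl fun j _ => ?_
  have hmod : ((m + (r : ZMod N)).val * j.val) % N = ((m.val + r) * j.val) % N := by
    have h1 : (m + (r : ZMod N)).val % N = (m.val + r) % N := by
      rw [ZMod.val_add, ZMod.val_natCast]
      rw [Nat.add_mod m.val (r % N), Nat.mod_mod_of_dvd r dvd_rfl, ← Nat.add_mod, Nat.mod_mod_of_dvd _ dvd_rfl]
    exact Nat.ModEq.mul_right j.val h1
  simp only []
  rw [pow_congr_mod hζN hmod, add_mul, pow_add]
  ring

lemma period_iff {F : Type*} [Field F] {N : ℕ} [NeZero N] {ζ : F}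
    (hζ : IsPrimitiveRoot ζ N) (hNF : (N : F) ≠ 0) (f : ZMod N → F) (r : ℕ) :
    IsPeriodOf (dft ζ f) r ↔ ∀ j : ZMod N, f j ≠ 0 → N ∣ r * j.val := by
  constructor
  · intro hp
    have hz : ∀ m, dft ζ (fun j => f j * ζ ^ (r * j.val) - f j) m = 0 := by
      intro m
      have : dft ζ (fun j => f j * ζ ^ (r * j.val) - f j) m
          = dft ζ (fun j => f j * ζ ^ (r * j.val)) m - dft ζ f m := by
        unfold dft; rw [← Finset.sum_sub_distrib]
        exact Finset.sum_congr rfl fun j _ => by ring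
      rw [this, ← dft_shift hζ.pow_eq_one f r m, hp m, sub_self]
    have := dft_zero_imp hζ hNF hz
    intro j hj
    have hj' := congrFun this j
    simp only [Pi.zero_apply, sub_eq_zero] at hj'
    have : ζ ^ (r * j.val) = 1 := by
      have hj'' : f j * ζ ^ (r * j.val) = f j * 1 := by rw [mul_one]; exact hj'
      exact mul_left_cancel₀ hj hj''
    exact (hζ.pow_eq_one_iff_dvd _).mp this
  · intro hd m
    rw [dft_shift hζ.pow_eq_one f r m]
    unfold dft
    refine Finset.sum_congr rfl fun j _ => ?_
    by_cases hj : f j = 0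
    · simp [hj]
    · simp only []
      rw [(hζ.pow_eq_one_iff_dvd _).mpr (hd j hj)]; ring

lemma arith_iff {N d r : ℕ} (hN : N ≠ 0) : N ∣ r * d ↔ N / Nat.gcd N d ∣ r := by
  have hg : 0 < Nat.gcd N d := Nat.gcd_pos_of_pos_left d (Nat.pos_of_ne_zero hN)
  have hgN : Nat.gcd N d ∣ N := Nat.gcd_dvd_left N d
  constructor
  · intro h
    have h2 : N ∣ r * Nat.gcd N d := by
      rw [← Nat.gcd_mul_left r N d]
      exact Nat.dvd_gcd ⟨r, Nat.mul_comm r N⟩ h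
    have h3 : (N / Nat.gcd N d) * Nat.gcd N d ∣ r * Nat.gcd N d := by
      rwa [Nat.div_mul_cancel hgN]
    exact (Nat.mul_dvd_mul_iff_right hg).mp h3
  · intro h
    calc N = (N / Nat.gcd N d) * Nat.gcd N d := (Nat.div_mul_cancel hgN).symm
    _ ∣ r * d := Nat.mul_dvd_mul h (Nat.gcd_dvd_right N d)

lemma supp_iff {N : ℕ} [NeZero N] {F : Type*} [Field F] (f : ZMod N → F) (r : ℕ) :
    (∀ j : ZMod N, f j ≠ 0 → N ∣ r * j.val) ↔
      N ∣ r * ((Finset.univ.filter fun j : ZMod N => f j ≠ 0).gcd ZMod.val) := by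
  constructor
  · intro h
    have : N ∣ (Finset.univ.filter fun j : ZMod N => f j ≠ 0).gcd (fun j => r * j.val) :=
      Finset.dvd_gcd fun j hj => h j (Finset.mem_filter.mp hj).2
    rwa [Finset.gcd_mul_left, normalize_eq] at this
  · intro h j hj
    have hd : ((Finset.univ.filter fun j : ZMod N => f j ≠ 0).gcd ZMod.val) ∣ j.val :=
      Finset.gcd_dvd (Finset.mem_filter.mpr ⟨Finset.mem_univ _, hj⟩)
    exact h.trans (Nat.mul_dvd_mul_left r hd)

lemma least_of_iff {N : ℕ} {α : Type*} (g : ZMod N → α) (P : ℕ) (hP : 0 < P)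
    (h : ∀ r, IsPeriodOf g r ↔ P ∣ r) : IsLeastPeriod g P :=
  ⟨hP, (h P).mpr dvd_rfl, fun s hs hps => Nat.le_of_dvd hs ((h s).mp hps)⟩

/-- Proposition 3.1 (inverse DFT part): the least period of the inverse DFT
`F_{ζ_N}⁻¹[f]` equals the least period of `F_{ζ_N}[f]`,
namely `N / gcd(N, supp f)`. -/
theorem leastPeriod_idft_eq
    (q N : ℕ) (Fq : Type) [Field Fq] [Fintype Fq] (hcard : Fintype.card Fq = q)
    [NeZero N] (hN : N ∣ q - 1)
    (ζ : Fq) (hζ : IsPrimitiveRoot ζ N)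
    (f : ZMod N → Fq) (hf : f ≠ 0) :
    IsLeastPeriod (idft ζ f)
        (N / Nat.gcd N ((Finset.univ.filter fun j : ZMod N => f j ≠ 0).gcd ZMod.val)) ∧
      IsLeastPeriod (dft ζ f)
        (N / Nat.gcd N ((Finset.univ.filter fun j : ZMod N => f j ≠ 0).gcd ZMod.val)) := by
  have hNe : N ≠ 0 := NeZero.ne N
  -- (N : Fq) ≠ 0
  have hNF : (N : Fq) ≠ 0 := by
    intro h0
    have hq : ((q : ℕ) : Fq) = 0 := by
      rw [← hcard]; exact FiniteField.cast_card_eq_zero Fq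
    have hq1 : 1 ≤ q := by
      rw [← hcard]; exact Fintype.card_pos
    obtain ⟨k, hk⟩ := hN
    have : ((q - 1 : ℕ) : Fq) = 0 := by rw [hk]; push_cast [h0]; ring
    rw [Nat.cast_sub hq1, hq, Nat.cast_one, zero_sub, neg_eq_zero] at this
    exact one_ne_zero this
  set d := (Finset.univ.filter fun j : ZMod N => f j ≠ 0).gcd ZMod.val with hd
  have hP : 0 < N / Nat.gcd N d :=
    Nat.div_pos (Nat.le_of_dvd (Nat.pos_of_ne_zero hNe) (Nat.gcd_dvd_left N d))
      (Nat.gcd_pos_of_pos_left d (Nat.pos_of_ne_zero hNe))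
  have key : ∀ (ξ : Fq), IsPrimitiveRoot ξ N →
      ∀ r, IsPeriodOf (dft ξ f) r ↔ N / Nat.gcd N d ∣ r := by
    intro ξ hξ r
    rw [period_iff hξ hNF f r, supp_iff f r, ← hd, arith_iff hNe]
  refine ⟨?_, least_of_iff _ _ hP (key ζ hζ)⟩
  refine least_of_iff _ _ hP ?_
  intro r
  rw [← key ζ⁻¹ hζ.inv r]
  have hmul : ∀ s, IsPeriodOf (idft ζ f) s ↔ IsPeriodOf (dft ζ⁻¹ f) s := by
    intro s
    unfold IsPeriodOf idft
    constructor
    · intro h m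
      exact mul_left_cancel₀ (inv_ne_zero hNF) (h m)
    · intro h m
      rw [h m]
  exact hmul r
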